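/- Let ε ∈ (0, 1/2], set ρ := √(ε/2), and define w_ε : [0,1] × [−ρ, ρ] → ℝ by w_ε(x₁, x₂) := x₁^{1−ε}·(x₂²/2 − 1) (with w_ε(0, x₂) := 0). Then w_ε is convex on [0,1] × [−ρ, ρ], and for every (x₁, x₂) ∈ (0,1) × (−ρ, ρ) the determinant of the Hessian of w_ε satisfies det D²w_ε(x₁, x₂) ≥ ε/4. -/

import Mathlib

open Set Metric MeasureTheory

/-- The determinant of the Hessian matrix of `w` at `x`. -/
noncomputable def hessDet {n : ℕ} (w : EuclideanSpace ℝ (Fin n) → ℝ)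
    (x : EuclideanSpace ℝ (Fin n)) : ℝ :=
  (Matrix.of fun i j : Fin n =>
    fderiv ℝ (fun y => fderiv ℝ w y (EuclideanSpace.single i 1)) x
      (EuclideanSpace.single j 1)).det

private lemma quad_nonneg (A B C u v : ℝ) (hA : 0 < A) (h : B ^ 2 ≤ A * C) :
    0 ≤ A * u ^ 2 + 2 * B * (u * v) + C * v ^ 2 := by
  nlinarith [sq_nonneg (A * u + B * v), mul_nonneg (sub_nonneg.2 h) (sq_nonneg v)]

set_option maxHeartbeats 1600000 in
/-- Convexity of `t ↦ (p+tu)^(1-ε) ((q+tv)²/2 - 1)` on `[0,1]`. -/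
private lemma seg_convex (ε ρ : ℝ) (hε0 : 0 < ε) (hε2 : ε ≤ 1 / 2) (hρ2 : ρ ^ 2 = ε / 2)
    (p u q v : ℝ) (hp : p ∈ Icc (0 : ℝ) 1) (hpu : p + u ∈ Icc (0 : ℝ) 1)
    (hq : q ∈ Icc (-ρ) ρ) (hqv : q + v ∈ Icc (-ρ) ρ) :
    ConvexOn ℝ (Icc (0 : ℝ) 1)
      (fun t => (p + t * u) ^ (1 - ε) * ((q + t * v) ^ 2 / 2 - 1)) := by
  have hα : (0 : ℝ) < 1 - ε := by linarith
  by_cases hdeg : p = 0 ∧ u = 0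
  · simp only [hdeg.1, hdeg.2, mul_zero, add_zero, Real.zero_rpow hα.ne', zero_mul]
    exact convexOn_const 0 (convex_Icc 0 1)
  · -- positivity of the base on the open interval
    have hP : ∀ t ∈ Ioo (0 : ℝ) 1, 0 < p + t * u := by
      intro t ht
      obtain ⟨ht1, ht2⟩ := ht
      rcases eq_or_lt_of_le hp.1 with h0 | h0
      · have hpz : p = 0 := h0.symm
        have hu0 : 0 ≤ u := by have := hpu.1; linarith
        have hune : u ≠ 0 := fun h => hdeg ⟨hpz, h⟩
        have hu : 0 < u := lt_of_le_of_ne hu0 (Ne.symm hune)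
        have : 0 < t * u := mul_pos ht1 hu
        linarith
      · nlinarith [mul_nonneg ht1.le hpu.1, mul_pos (by linarith : (0:ℝ) < 1 - t) h0]
    have hlin : ∀ t : ℝ, HasDerivAt (fun t => p + t * u) u t := fun t => by
      simpa using ((hasDerivAt_id t).mul_const u).const_add p
    have hlinq : ∀ t : ℝ, HasDerivAt (fun t => q + t * v) v t := fun t => by
      simpa using ((hasDerivAt_id t).mul_const v).const_add q
    have hquad : ∀ t : ℝ, HasDerivAt (fun t => (q + t * v) ^ 2 / 2 - 1) ((q + t * v) * v) t := by
      intro t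
      have h := (((hlinq t).pow 2).div_const 2).sub_const 1
      refine h.congr_deriv ?_
      push_cast
      ring
    have hquad2 : ∀ t : ℝ, HasDerivAt (fun t => (q + t * v) * v) (v * v) t := fun t =>
      (hlinq t).mul_const v
    have hrpowA : ∀ t, 0 < p + t * u →
        HasDerivAt (fun t => (p + t * u) ^ (1 - ε)) ((1 - ε) * (p + t * u) ^ (-ε) * u) t := by
      intro t hPt
      have h := (Real.hasDerivAt_rpow_const (x := p + t * u) (p := 1 - ε)
        (Or.inl hPt.ne')).comp t (hlin t)
      rw [show (1 : ℝ) - ε - 1 = -ε by ring] at h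
      exact h
    have hrpowB : ∀ t, 0 < p + t * u →
        HasDerivAt (fun t => (p + t * u) ^ (-ε)) ((-ε) * (p + t * u) ^ (-ε - 1) * u) t := by
      intro t hPt
      have h := (Real.hasDerivAt_rpow_const (x := p + t * u) (p := -ε)
        (Or.inl hPt.ne')).comp t (hlin t)
      exact h
    -- first and second derivatives
    have hF' : ∀ t ∈ Ioo (0 : ℝ) 1,
        HasDerivAt (fun t => (p + t * u) ^ (1 - ε) * ((q + t * v) ^ 2 / 2 - 1))
          ((1 - ε) * (p + t * u) ^ (-ε) * u * ((q + t * v) ^ 2 / 2 - 1) +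
            (p + t * u) ^ (1 - ε) * ((q + t * v) * v)) t := by
      intro t ht
      exact (hrpowA t (hP t ht)).mul (hquad t)
    have hF'' : ∀ t ∈ Ioo (0 : ℝ) 1,
        HasDerivAt (fun t => (1 - ε) * (p + t * u) ^ (-ε) * u * ((q + t * v) ^ 2 / 2 - 1) +
            (p + t * u) ^ (1 - ε) * ((q + t * v) * v))
          (((-ε) * (p + t * u) ^ (-ε - 1) * u * ((1 - ε) * u) * ((q + t * v) ^ 2 / 2 - 1) +
              (1 - ε) * (p + t * u) ^ (-ε) * u * ((q + t * v) * v)) +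
            ((1 - ε) * (p + t * u) ^ (-ε) * u * ((q + t * v) * v) +
              (p + t * u) ^ (1 - ε) * (v * v))) t := by
      intro t ht
      have h1 : HasDerivAt (fun t => (1 - ε) * (p + t * u) ^ (-ε) * u)
          ((-ε) * (p + t * u) ^ (-ε - 1) * u * ((1 - ε) * u)) t := by
        have := ((hrpowB t (hP t ht)).const_mul (1 - ε)).mul_const u
        refine this.congr_deriv ?_
        ring
      exact (h1.mul (hquad t)).add ((hrpowA t (hP t ht)).mul (hquad2 t))
    -- continuity
    have hcont : Continuous (fun t => (p + t * u) ^ (1 - ε) * ((q + t * v) ^ 2 / 2 - 1)) := by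
      apply Continuous.mul
      · exact (Real.continuous_rpow_const hα.le).comp (by continuity)
      · continuity
    -- apply the convexity criterion
    refine convexOn_of_hasDerivWithinAt2_nonneg (convex_Icc 0 1) hcont.continuousOn
      (f' := fun t => (1 - ε) * (p + t * u) ^ (-ε) * u * ((q + t * v) ^ 2 / 2 - 1) +
        (p + t * u) ^ (1 - ε) * ((q + t * v) * v))
      (f'' := fun t => ((-ε) * (p + t * u) ^ (-ε - 1) * u * ((1 - ε) * u) *
            ((q + t * v) ^ 2 / 2 - 1) +
          (1 - ε) * (p + t * u) ^ (-ε) * u * ((q + t * v) * v)) +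
        ((1 - ε) * (p + t * u) ^ (-ε) * u * ((q + t * v) * v) +
          (p + t * u) ^ (1 - ε) * (v * v)))
      ?_ ?_ ?_
    · intro t ht
      rw [interior_Icc] at ht
      exact (hF' t ht).hasDerivWithinAt
    · intro t ht
      rw [interior_Icc] at ht
      exact (hF'' t ht).hasDerivWithinAt
    · intro t ht
      rw [interior_Icc] at ht
      have hPt : 0 < p + t * u := hP t ht
      obtain ⟨ht1, ht2⟩ := ht
      clear hF' hF'' hquad hquad2 hrpowA hrpowB hlin hlinq hcont hP
      have hr1 : q + t * v ≤ ρ := by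
        have e1 : t * (q + v) ≤ t * ρ := mul_le_mul_of_nonneg_left hqv.2 ht1.le
        have e2 : (1 - t) * q ≤ (1 - t) * ρ := mul_le_mul_of_nonneg_left hq.2 (by linarith)
        nlinarith [e1, e2]
      have hr2 : -ρ ≤ q + t * v := by
        have e1 : t * (-ρ) ≤ t * (q + v) := mul_le_mul_of_nonneg_left hqv.1 ht1.le
        have e2 : (1 - t) * (-ρ) ≤ (1 - t) * q := mul_le_mul_of_nonneg_left hq.1 (by linarith)
        nlinarith [e1, e2]
      have hrsq : (q + t * v) ^ 2 ≤ ε / 2 := by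
        have := sq_le_sq' hr2 hr1
        rwa [hρ2] at this
      have hs1 : 0 < (p + t * u) ^ (-ε - 1) := Real.rpow_pos_of_pos hPt _
      have hs2 : 0 < (p + t * u) ^ (-ε) := Real.rpow_pos_of_pos hPt _
      have hs3 : 0 < (p + t * u) ^ (1 - ε) := Real.rpow_pos_of_pos hPt _
      have hmul : (p + t * u) ^ (-ε - 1) * (p + t * u) ^ (1 - ε) =
          (p + t * u) ^ (-ε) * (p + t * u) ^ (-ε) := by
        rw [← Real.rpow_add hPt, ← Real.rpow_add hPt]
        ring_nf
      have hbr : 0 ≤ ε * (1 - (q + t * v) ^ 2 / 2) - (1 - ε) * (q + t * v) ^ 2 := by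
        have k1 : (q + t * v) ^ 2 * (1 - ε / 2) ≤ (ε / 2) * (1 - ε / 2) :=
          mul_le_mul_of_nonneg_right hrsq (by linarith)
        have k2 : 0 ≤ ε * ε := mul_nonneg hε0.le hε0.le
        linarith [k1, k2]
      have h2r : (q + t * v) ^ 2 / 2 < 1 := by linarith [hrsq]
      have hA : 0 < (1 - ε) * ε * (1 - (q + t * v) ^ 2 / 2) * (p + t * u) ^ (-ε - 1) :=
        mul_pos (mul_pos (mul_pos (by linarith) hε0) (by linarith)) hs1
      have hACB : ((1 - ε) * (p + t * u) ^ (-ε) * (q + t * v)) ^ 2 ≤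
          ((1 - ε) * ε * (1 - (q + t * v) ^ 2 / 2) * (p + t * u) ^ (-ε - 1)) *
            (p + t * u) ^ (1 - ε) := by
        have key : ((1 - ε) * ε * (1 - (q + t * v) ^ 2 / 2) * (p + t * u) ^ (-ε - 1)) *
              (p + t * u) ^ (1 - ε) - ((1 - ε) * (p + t * u) ^ (-ε) * (q + t * v)) ^ 2 =
            ((p + t * u) ^ (-ε) * (p + t * u) ^ (-ε)) *
              ((1 - ε) * (ε * (1 - (q + t * v) ^ 2 / 2) - (1 - ε) * (q + t * v) ^ 2)) := by
          linear_combination ((1 - ε) * ε * (1 - (q + t * v) ^ 2 / 2)) * hmul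
        have hnn : 0 ≤ ((p + t * u) ^ (-ε) * (p + t * u) ^ (-ε)) *
            ((1 - ε) * (ε * (1 - (q + t * v) ^ 2 / 2) - (1 - ε) * (q + t * v) ^ 2)) :=
          mul_nonneg (mul_nonneg hs2.le hs2.le) (mul_nonneg (by linarith) hbr)
        linarith [key, hnn]
      have hquad := quad_nonneg
        ((1 - ε) * ε * (1 - (q + t * v) ^ 2 / 2) * (p + t * u) ^ (-ε - 1))
        ((1 - ε) * (p + t * u) ^ (-ε) * (q + t * v)) ((p + t * u) ^ (1 - ε)) u v hA hACB
      have hEq : ((-ε) * (p + t * u) ^ (-ε - 1) * u * ((1 - ε) * u) *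
            ((q + t * v) ^ 2 / 2 - 1) +
          (1 - ε) * (p + t * u) ^ (-ε) * u * ((q + t * v) * v)) +
        ((1 - ε) * (p + t * u) ^ (-ε) * u * ((q + t * v) * v) +
          (p + t * u) ^ (1 - ε) * (v * v)) =
          ((1 - ε) * ε * (1 - (q + t * v) ^ 2 / 2) * (p + t * u) ^ (-ε - 1)) * u ^ 2 +
          2 * ((1 - ε) * (p + t * u) ^ (-ε) * (q + t * v)) * (u * v) +
          (p + t * u) ^ (1 - ε) * v ^ 2 := by ring
      show 0 ≤ ((-ε) * (p + t * u) ^ (-ε - 1) * u * ((1 - ε) * u) *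
            ((q + t * v) ^ 2 / 2 - 1) +
          (1 - ε) * (p + t * u) ^ (-ε) * u * ((q + t * v) * v)) +
        ((1 - ε) * (p + t * u) ^ (-ε) * u * ((q + t * v) * v) +
          (p + t * u) ^ (1 - ε) * (v * v))
      rw [hEq]
      exact hquad

set_option maxHeartbeats 1600000 in
theorem convex_and_hessDet_lower_bound_dim_two
    (ε : ℝ) (hε : ε ∈ Ioc (0 : ℝ) (1 / 2)) (ρ : ℝ) (hρ : ρ = Real.sqrt (ε / 2)) :
    ConvexOn ℝ {x : EuclideanSpace ℝ (Fin 2) | x 0 ∈ Icc (0 : ℝ) 1 ∧ x 1 ∈ Icc (-ρ) ρ}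
        (fun x => x 0 ^ (1 - ε) * (x 1 ^ 2 / 2 - 1)) ∧
      ∀ x : EuclideanSpace ℝ (Fin 2), x 0 ∈ Ioo (0 : ℝ) 1 → x 1 ∈ Ioo (-ρ) ρ →
        ε / 4 ≤ hessDet (fun y => y 0 ^ (1 - ε) * (y 1 ^ 2 / 2 - 1)) x := by
  obtain ⟨hε0, hε2⟩ := hε
  have hρ2 : ρ ^ 2 = ε / 2 := by rw [hρ]; exact Real.sq_sqrt (by linarith)
  have hα : (0 : ℝ) < 1 - ε := by linarith
  constructor
  · constructor
    · -- convexity of the rectangle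
      intro x hx y hy a b ha hb hab
      obtain ⟨hx0, hx1⟩ := hx
      obtain ⟨hy0, hy1⟩ := hy
      constructor
      · simp only [PiLp.add_apply, PiLp.smul_apply, smul_eq_mul]
        constructor
        · nlinarith [mul_nonneg ha hx0.1, mul_nonneg hb hy0.1]
        · nlinarith [mul_nonneg ha (by linarith [hx0.2] : (0:ℝ) ≤ 1 - x 0),
            mul_nonneg hb (by linarith [hy0.2] : (0:ℝ) ≤ 1 - y 0)]
      · simp only [PiLp.add_apply, PiLp.smul_apply, smul_eq_mul]
        constructor
        · have hρab : a * ρ + b * ρ = ρ := by linear_combination ρ * hab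
          nlinarith [mul_nonneg ha (by linarith [hx1.1] : (0:ℝ) ≤ x 1 + ρ),
            mul_nonneg hb (by linarith [hy1.1] : (0:ℝ) ≤ y 1 + ρ)]
        · have hρab : a * ρ + b * ρ = ρ := by linear_combination ρ * hab
          nlinarith [mul_nonneg ha (by linarith [hx1.2] : (0:ℝ) ≤ ρ - x 1),
            mul_nonneg hb (by linarith [hy1.2] : (0:ℝ) ≤ ρ - y 1)]
    · -- the convexity inequality, via restriction to segments
      intro x hx y hy a b ha hb hab
      have key := seg_convex ε ρ hε0 hε2 hρ2 (x 0) (y 0 - x 0) (x 1) (y 1 - x 1)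
        hx.1 (by rw [show x 0 + (y 0 - x 0) = y 0 by ring]; exact hy.1)
        hx.2 (by rw [show x 1 + (y 1 - x 1) = y 1 by ring]; exact hy.2)
      have h := key.2 (show (0:ℝ) ∈ Icc (0:ℝ) 1 by norm_num)
        (show (1:ℝ) ∈ Icc (0:ℝ) 1 by norm_num) ha hb hab
      simp only [smul_eq_mul, mul_zero, mul_one, zero_add, add_zero, zero_mul] at h
      simp only [PiLp.add_apply, PiLp.smul_apply, smul_eq_mul]
      rw [show a * x 0 + b * y 0 = x 0 + b * (y 0 - x 0) by linear_combination (x 0) * hab,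
        show a * x 1 + b * y 1 = x 1 + b * (y 1 - x 1) by linear_combination (x 1) * hab]
      convert h using 3 <;> ring
  · -- Hessian determinant lower bound
    intro x hx0 hx1
    set w : EuclideanSpace ℝ (Fin 2) → ℝ := fun y => y 0 ^ (1 - ε) * (y 1 ^ 2 / 2 - 1) with hw
    have hco : ∀ (i : Fin 2) (y : EuclideanSpace ℝ (Fin 2)),
        HasFDerivAt (fun z : EuclideanSpace ℝ (Fin 2) => z i)
          (EuclideanSpace.proj i : EuclideanSpace ℝ (Fin 2) →L[ℝ] ℝ) y := fun i y =>
      (EuclideanSpace.proj i : EuclideanSpace ℝ (Fin 2) →L[ℝ] ℝ).hasFDerivAt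
    have hquadF : ∀ y : EuclideanSpace ℝ (Fin 2),
        HasFDerivAt (fun z : EuclideanSpace ℝ (Fin 2) => z 1 ^ 2 / 2 - 1)
          ((y 1) • (EuclideanSpace.proj 1 : EuclideanSpace ℝ (Fin 2) →L[ℝ] ℝ)) y := by
      intro y
      have h0 : HasDerivAt (fun s : ℝ => s ^ 2 / 2 - 1) (y 1) (y 1) := by
        have h := (((hasDerivAt_id (y 1)).pow 2).div_const 2).sub_const 1
        refine h.congr_deriv ?_
        simp [id_eq]
      exact h0.comp_hasFDerivAt y (hco 1 y)
    have hrpowF : ∀ y : EuclideanSpace ℝ (Fin 2), 0 < y 0 → ∀ c : ℝ, c ≠ 0 →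
        HasFDerivAt (fun z : EuclideanSpace ℝ (Fin 2) => z 0 ^ c)
          ((c * y 0 ^ (c - 1)) • (EuclideanSpace.proj 0 : EuclideanSpace ℝ (Fin 2) →L[ℝ] ℝ)) y := by
      intro y hy c _
      exact (Real.hasDerivAt_rpow_const (x := y 0) (p := c)
        (Or.inl hy.ne')).comp_hasFDerivAt y (hco 0 y)
    have hwD : ∀ y : EuclideanSpace ℝ (Fin 2), 0 < y 0 →
        HasFDerivAt w
          ((y 0 ^ (1 - ε)) • ((y 1) • (EuclideanSpace.proj 1 : EuclideanSpace ℝ (Fin 2) →L[ℝ] ℝ)) +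
            (y 1 ^ 2 / 2 - 1) • (((1 - ε) * y 0 ^ (-ε)) •
              (EuclideanSpace.proj 0 : EuclideanSpace ℝ (Fin 2) →L[ℝ] ℝ))) y := by
      intro y hy
      have hA := hrpowF y hy (1 - ε) hα.ne'
      rw [show (1 : ℝ) - ε - 1 = -ε by ring] at hA
      exact hA.mul (hquadF y)
    have hU : IsOpen {y : EuclideanSpace ℝ (Fin 2) | 0 < y 0} :=
      isOpen_Ioi.preimage (EuclideanSpace.proj (0 : Fin 2) :
        EuclideanSpace ℝ (Fin 2) →L[ℝ] ℝ).continuous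
    have hmemU : x ∈ {y : EuclideanSpace ℝ (Fin 2) | 0 < y 0} := hx0.1
    -- first-order partials on U
    have h0eq : ∀ y ∈ {y : EuclideanSpace ℝ (Fin 2) | 0 < y 0},
        fderiv ℝ w y (EuclideanSpace.single 0 1) = (y 1 ^ 2 / 2 - 1) * ((1 - ε) * y 0 ^ (-ε)) := by
      intro y hy
      rw [(hwD y hy).fderiv]
      simp [EuclideanSpace.single_apply]
    have h1eq : ∀ y ∈ {y : EuclideanSpace ℝ (Fin 2) | 0 < y 0},
        fderiv ℝ w y (EuclideanSpace.single 1 1) = y 0 ^ (1 - ε) * y 1 := by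
      intro y hy
      rw [(hwD y hy).fderiv]
      simp [EuclideanSpace.single_apply]
    have heq0 : (fun y => fderiv ℝ w y (EuclideanSpace.single 0 1)) =ᶠ[nhds x]
        (fun y : EuclideanSpace ℝ (Fin 2) => (y 1 ^ 2 / 2 - 1) * ((1 - ε) * y 0 ^ (-ε))) :=
      Filter.eventuallyEq_of_mem (hU.mem_nhds hmemU) h0eq
    have heq1 : (fun y => fderiv ℝ w y (EuclideanSpace.single 1 1)) =ᶠ[nhds x]
        (fun y : EuclideanSpace ℝ (Fin 2) => y 0 ^ (1 - ε) * y 1) :=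
      Filter.eventuallyEq_of_mem (hU.mem_nhds hmemU) h1eq
    -- second-order derivatives
    have hC : HasFDerivAt (fun y : EuclideanSpace ℝ (Fin 2) => (1 - ε) * y 0 ^ (-ε))
        ((1 - ε) • (((-ε) * x 0 ^ (-ε - 1)) •
          (EuclideanSpace.proj 0 : EuclideanSpace ℝ (Fin 2) →L[ℝ] ℝ))) x := by
      exact (hrpowF x hx0.1 (-ε) (by linarith)).const_mul (1 - ε)
    have hd0 : HasFDerivAt
        (fun y : EuclideanSpace ℝ (Fin 2) => (y 1 ^ 2 / 2 - 1) * ((1 - ε) * y 0 ^ (-ε)))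
        ((x 1 ^ 2 / 2 - 1) • ((1 - ε) • (((-ε) * x 0 ^ (-ε - 1)) •
            (EuclideanSpace.proj 0 : EuclideanSpace ℝ (Fin 2) →L[ℝ] ℝ))) +
          ((1 - ε) * x 0 ^ (-ε)) • ((x 1) •
            (EuclideanSpace.proj 1 : EuclideanSpace ℝ (Fin 2) →L[ℝ] ℝ))) x :=
      (hquadF x).mul hC
    have hA' : HasFDerivAt (fun y : EuclideanSpace ℝ (Fin 2) => y 0 ^ (1 - ε))
        (((1 - ε) * x 0 ^ (-ε)) •
          (EuclideanSpace.proj 0 : EuclideanSpace ℝ (Fin 2) →L[ℝ] ℝ)) x := by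
      have h := hrpowF x hx0.1 (1 - ε) hα.ne'
      rwa [show (1 : ℝ) - ε - 1 = -ε by ring] at h
    have hd1 : HasFDerivAt (fun y : EuclideanSpace ℝ (Fin 2) => y 0 ^ (1 - ε) * y 1)
        ((x 0 ^ (1 - ε)) • (EuclideanSpace.proj 1 : EuclideanSpace ℝ (Fin 2) →L[ℝ] ℝ) +
          (x 1) • (((1 - ε) * x 0 ^ (-ε)) •
            (EuclideanSpace.proj 0 : EuclideanSpace ℝ (Fin 2) →L[ℝ] ℝ))) x :=
      hA'.mul (hco 1 x)
    have E00 : fderiv ℝ (fun y => fderiv ℝ w y (EuclideanSpace.single 0 1)) x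
        (EuclideanSpace.single 0 1) = (x 1 ^ 2 / 2 - 1) * ((1 - ε) * ((-ε) * x 0 ^ (-ε - 1))) := by
      rw [heq0.fderiv_eq, hd0.fderiv]
      simp [EuclideanSpace.single_apply]
    have E01 : fderiv ℝ (fun y => fderiv ℝ w y (EuclideanSpace.single 0 1)) x
        (EuclideanSpace.single 1 1) = (1 - ε) * x 0 ^ (-ε) * x 1 := by
      rw [heq0.fderiv_eq, hd0.fderiv]
      simp [EuclideanSpace.single_apply]
    have E10 : fderiv ℝ (fun y => fderiv ℝ w y (EuclideanSpace.single 1 1)) x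
        (EuclideanSpace.single 0 1) = x 1 * ((1 - ε) * x 0 ^ (-ε)) := by
      rw [heq1.fderiv_eq, hd1.fderiv]
      simp [EuclideanSpace.single_apply]
    have E11 : fderiv ℝ (fun y => fderiv ℝ w y (EuclideanSpace.single 1 1)) x
        (EuclideanSpace.single 1 1) = x 0 ^ (1 - ε) := by
      rw [heq1.fderiv_eq, hd1.fderiv]
      simp [EuclideanSpace.single_apply]
    rw [hessDet, Matrix.det_fin_two]
    simp only [Matrix.of_apply]
    rw [E00, E01, E10, E11]
    -- now pure algebra
    have hx1sq : x 1 ^ 2 ≤ ε / 2 := by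
      have := sq_le_sq' hx1.1.le hx1.2.le
      rwa [hρ2] at this
    have hmul : x 0 ^ (-ε - 1) * x 0 ^ (1 - ε) = x 0 ^ (-ε) * x 0 ^ (-ε) := by
      rw [← Real.rpow_add hx0.1, ← Real.rpow_add hx0.1]
      ring_nf
    have hone : 1 ≤ x 0 ^ (-ε) :=
      Real.one_le_rpow_of_pos_of_le_one_of_nonpos hx0.1 hx0.2.le (by linarith)
    set S := x 0 ^ (-ε)
    have key : (x 1 ^ 2 / 2 - 1) * ((1 - ε) * ((-ε) * x 0 ^ (-ε - 1))) * (x 0 ^ (1 - ε)) -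
        ((1 - ε) * S * x 1) * (x 1 * ((1 - ε) * S)) =
        (S * S) * ((1 - ε) * (ε * (1 - x 1 ^ 2 / 2) - (1 - ε) * x 1 ^ 2)) := by
      linear_combination ((1 - ε) * ε * (1 - x 1 ^ 2 / 2)) * hmul
    rw [key]
    have hB : ε / 2 ≤ ε * (1 - x 1 ^ 2 / 2) - (1 - ε) * x 1 ^ 2 := by
      have k1 : x 1 ^ 2 * (1 - ε / 2) ≤ (ε / 2) * (1 - ε / 2) :=
        mul_le_mul_of_nonneg_right hx1sq (by linarith)
      have k2 : 0 ≤ ε * ε := mul_nonneg hε0.le hε0.le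
      linarith [k1, k2]
    have hCc : ε / 4 ≤ (1 - ε) * (ε * (1 - x 1 ^ 2 / 2) - (1 - ε) * x 1 ^ 2) := by
      have l1 := mul_le_mul_of_nonneg_left hB (by linarith : (0:ℝ) ≤ 1 - ε)
      have k2 : ε * ε ≤ 1 / 2 * ε := mul_le_mul_of_nonneg_right hε2 hε0.le
      linarith [l1, k2]
    have hSS : (1:ℝ) ≤ S * S := by
      have := mul_le_mul hone hone zero_le_one (by linarith : (0:ℝ) ≤ S)
      simpa using this
    have hCnn : (0:ℝ) ≤ (1 - ε) * (ε * (1 - x 1 ^ 2 / 2) - (1 - ε) * x 1 ^ 2) := by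
      linarith [hCc, hε0]
    have l2 := mul_le_mul_of_nonneg_right hSS hCnn
    rw [one_mul] at l2
    linarith [l2, hCc]
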